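/- Taylor expansion of a polynomial along a trajectory: Let f be a polynomial vector field on ℝⁿ, p ∈ ℝ[x1, …, xn] a polynomial, and x : ℝ → ℝⁿ a differentiable function satisfying x'(t) = f(x(t)) for all t ∈ ℝ with x(0) = x0. Then the function t ↦ p(x(t)) is real-analytic at 0, and there exists a neighborhood of 0 on which p(x(t)) = Σ_{i=0}^∞ L^i_f p(x0) · tⁱ / i!, the series converging for all t in that neighborhood. -/

import Mathlib

open MvPolynomial Set

/-- Lie derivatives of a polynomial `p` along the polynomial vector field `f`. -/
noncomputable def lieDeriv {n : ℕ} (f : Fin n → MvPolynomial (Fin n) ℝ)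
    (p : MvPolynomial (Fin n) ℝ) : ℕ → MvPolynomial (Fin n) ℝ
  | 0 => p
  | k + 1 => ∑ i, (pderiv i (lieDeriv f p k)) * f i

/-- Evaluation of a polynomial vector field at a point of ℝⁿ. -/
noncomputable def evalVF {n : ℕ} (f : Fin n → MvPolynomial (Fin n) ℝ)
    (x : Fin n → ℝ) : Fin n → ℝ := fun i => eval x (f i)

/-- `x : ℝ → ℝⁿ` is a solution of `ẋ = F(x)` on `[0, ∞)`. -/
def IsSolutionOn {n : ℕ} (F : (Fin n → ℝ) → (Fin n → ℝ)) (x : ℝ → (Fin n → ℝ)) : Prop :=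
  ∀ t ∈ Ici (0:ℝ), HasDerivWithinAt x (F (x t)) (Ici 0) t

/-- Solutions of `ẋ = F(x)` exist and are unique on `[0, ∞)` for every initial condition. -/
def CompleteFlow {n : ℕ} (F : (Fin n → ℝ) → (Fin n → ℝ)) : Prop :=
  (∀ x0 : Fin n → ℝ, ∃ x : ℝ → (Fin n → ℝ), x 0 = x0 ∧ IsSolutionOn F x) ∧
  (∀ x y : ℝ → (Fin n → ℝ), IsSolutionOn F x → IsSolutionOn F y → x 0 = y 0 →
    ∀ t ∈ Ici (0:ℝ), x t = y t)

/-- `P` is a continuous invariant of `(D, F)`. -/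
def IsCI {n : ℕ} (D P : Set (Fin n → ℝ)) (F : (Fin n → ℝ) → (Fin n → ℝ)) : Prop :=
  ∀ x : ℝ → (Fin n → ℝ), IsSolutionOn F x → x 0 ∈ P ∩ D →
    ∀ T ≥ (0:ℝ), (∀ t ∈ Icc (0:ℝ) T, x t ∈ D) → ∀ t ∈ Icc (0:ℝ) T, x t ∈ P



namespace TaylorAux

variable {n : ℕ}

def degS (m : Fin n →₀ ℕ) : ℕ := ∑ i, m i

lemma degS_eq (m : Fin n →₀ ℕ) : degS m = m.sum fun _ e => e := by
  rw [degS, Finsupp.sum]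
  exact (Finset.sum_subset (Finset.subset_univ _)
    (by intro i _ h; exact Finsupp.notMem_support_iff.mp h)).symm

lemma degS_add (a b : Fin n →₀ ℕ) : degS (a + b) = degS a + degS b := by
  simp [degS, Finset.sum_add_distrib]

lemma degS_sub_le (m : Fin n →₀ ℕ) (s : Fin n →₀ ℕ) : degS (m - s) ≤ degS m :=
  Finset.sum_le_sum fun i _ => by simp [Finsupp.tsub_apply]

lemma apply_le_degS (m : Fin n →₀ ℕ) (i : Fin n) : m i ≤ degS m :=
  Finset.single_le_sum (fun j _ => Nat.zero_le _) (Finset.mem_univ i)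

lemma degS_le_totalDegree {q : MvPolynomial (Fin n) ℝ} {m : Fin n →₀ ℕ}
    (h : m ∈ q.support) : degS m ≤ q.totalDegree := by
  rw [degS_eq]; exact le_totalDegree h

noncomputable def Nm (R : ℝ) (q : MvPolynomial (Fin n) ℝ) : ℝ :=
  ∑ m ∈ q.support, |coeff m q| * R ^ degS m

lemma Nm_eq_of_subset {R : ℝ} {q : MvPolynomial (Fin n) ℝ} {S : Finset (Fin n →₀ ℕ)}
    (hS : q.support ⊆ S) : Nm R q = ∑ m ∈ S, |coeff m q| * R ^ degS m :=
  Finset.sum_subset hS (by intro m _ h; simp [MvPolynomial.notMem_support_iff.mp h])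

lemma Nm_nonneg {R : ℝ} (hR : 0 ≤ R) (q : MvPolynomial (Fin n) ℝ) : 0 ≤ Nm R q :=
  Finset.sum_nonneg fun m _ => mul_nonneg (abs_nonneg _) (pow_nonneg hR _)

lemma Nm_add_le {R : ℝ} (hR : 0 ≤ R) (q r : MvPolynomial (Fin n) ℝ) :
    Nm R (q + r) ≤ Nm R q + Nm R r := by
  classical
  rw [Nm_eq_of_subset (MvPolynomial.support_add (p := q) (q := r)),
    Nm_eq_of_subset (Finset.subset_union_left (s₁ := q.support) (s₂ := r.support)),
    Nm_eq_of_subset (Finset.subset_union_right (s₁ := q.support) (s₂ := r.support)),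
    ← Finset.sum_add_distrib]
  refine Finset.sum_le_sum fun m _ => ?_
  rw [← add_mul]
  exact mul_le_mul_of_nonneg_right (by simpa using abs_add_le (coeff m q) (coeff m r))
    (pow_nonneg hR _)

lemma Nm_sum_le {R : ℝ} (hR : 0 ≤ R) {ι : Type*} (s : Finset ι)
    (q : ι → MvPolynomial (Fin n) ℝ) :
    Nm R (∑ j ∈ s, q j) ≤ ∑ j ∈ s, Nm R (q j) := by
  classical
  induction s using Finset.induction_on with
  | empty => simp [Nm]
  | insert _ _ hj ih =>
      rw [Finset.sum_insert hj, Finset.sum_insert hj]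
      exact le_trans (Nm_add_le hR _ _) (by gcongr)

lemma Nm_monomial_le {R : ℝ} (hR : 0 ≤ R) (m : Fin n →₀ ℕ) (a : ℝ) :
    Nm R (monomial m a) ≤ |a| * R ^ degS m := by
  classical
  by_cases ha : a = 0
  · simp [ha, Nm]
  · rw [Nm, support_monomial, if_neg ha, Finset.sum_singleton, coeff_monomial, if_pos rfl]

lemma Nm_monomial_mul_le {R : ℝ} (hR : 0 ≤ R) (m : Fin n →₀ ℕ) (a : ℝ)
    (r : MvPolynomial (Fin n) ℝ) :
    Nm R (monomial m a * r) ≤ |a| * R ^ degS m * Nm R r := by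
  classical
  conv_lhs => rw [r.as_sum, Finset.mul_sum]
  refine le_trans (Nm_sum_le hR _ _) ?_
  rw [Nm, Finset.mul_sum]
  refine Finset.sum_le_sum fun b hb => ?_
  rw [monomial_mul]
  refine le_trans (Nm_monomial_le hR _ _) (le_of_eq ?_)
  rw [abs_mul, degS_add, pow_add]; ring

lemma Nm_mul_le {R : ℝ} (hR : 0 ≤ R) (q r : MvPolynomial (Fin n) ℝ) :
    Nm R (q * r) ≤ Nm R q * Nm R r := by
  classical
  conv_lhs => rw [q.as_sum, Finset.sum_mul]
  refine le_trans (Nm_sum_le hR _ _) ?_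
  rw [Nm, Finset.sum_mul]
  exact Finset.sum_le_sum fun m hm => Nm_monomial_mul_le hR _ _ _

lemma abs_eval_le {R : ℝ} (hR : 0 ≤ R) {y : Fin n → ℝ} (hy : ∀ i, |y i| ≤ R)
    (q : MvPolynomial (Fin n) ℝ) : |eval y q| ≤ Nm R q := by
  rw [eval_eq']
  refine le_trans (Finset.abs_sum_le_sum_abs _ _) (Finset.sum_le_sum fun m hm => ?_)
  rw [abs_mul]
  refine mul_le_mul_of_nonneg_left ?_ (abs_nonneg _)
  calc |∏ i, y i ^ m i| = ∏ i, |y i| ^ m i := by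
        rw [Finset.abs_prod]; exact Finset.prod_congr rfl fun i _ => abs_pow _ _
    _ ≤ ∏ i, R ^ m i := by
        refine Finset.prod_le_prod (fun i _ => pow_nonneg (abs_nonneg _) _)
          (fun i _ => pow_le_pow_left₀ (abs_nonneg _) (hy i) _)
    _ = R ^ degS m := by rw [degS, ← Finset.prod_pow_eq_pow_sum]

lemma Nm_pderiv_le {R : ℝ} (hR : 1 ≤ R) (i : Fin n) (q : MvPolynomial (Fin n) ℝ) :
    Nm R (pderiv i q) ≤ (q.totalDegree : ℝ) * Nm R q := by
  classical
  have h0 : (0:ℝ) ≤ R := le_trans zero_le_one hR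
  conv_lhs => rw [q.as_sum, map_sum]
  refine le_trans (Nm_sum_le h0 _ _) ?_
  rw [Nm, Finset.mul_sum]
  refine Finset.sum_le_sum fun m hm => ?_
  rw [pderiv_monomial]
  refine le_trans (Nm_monomial_le h0 _ _) ?_
  rw [abs_mul]
  calc |coeff m q| * |(m i : ℝ)| * R ^ degS (m - Finsupp.single i 1)
      ≤ |coeff m q| * (q.totalDegree : ℝ) * R ^ degS m := by
        refine mul_le_mul (mul_le_mul_of_nonneg_left ?_ (abs_nonneg _))
          (pow_le_pow_right₀ hR (degS_sub_le _ _)) (pow_nonneg h0 _)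
          (mul_nonneg (abs_nonneg _) (Nat.cast_nonneg _))
        rw [Nat.abs_cast]
        exact_mod_cast le_trans (apply_le_degS m i) (degS_le_totalDegree hm)
    _ = (q.totalDegree : ℝ) * (|coeff m q| * R ^ degS m) := by ring

lemma totalDegree_pderiv_le (i : Fin n) (q : MvPolynomial (Fin n) ℝ) :
    (pderiv i q).totalDegree ≤ q.totalDegree := by
  classical
  conv_lhs => rw [q.as_sum, map_sum]
  refine le_trans (totalDegree_finset_sum _ _) (Finset.sup_le fun m hm => ?_)
  rw [pderiv_monomial]
  refine le_trans (totalDegree_monomial_le _ _) ?_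
  have : ((m - Finsupp.single i 1).sum fun _ => id) = degS (m - Finsupp.single i 1) := by
    rw [degS_eq]; rfl
  rw [this]
  exact le_trans (degS_sub_le _ _) (degS_le_totalDegree hm)



lemma lie_totalDegree_le (f : Fin n → MvPolynomial (Fin n) ℝ) (p : MvPolynomial (Fin n) ℝ)
    (k : ℕ) :
    (lieDeriv f p k).totalDegree ≤ p.totalDegree + k * (Finset.univ.sup fun i => (f i).totalDegree) := by
  induction k with
  | zero => simp [lieDeriv]
  | succ k ih =>
      show (∑ i, (pderiv i (lieDeriv f p k)) * f i).totalDegree ≤ _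
      refine le_trans (totalDegree_finset_sum _ _) (Finset.sup_le fun i _ => ?_)
      refine le_trans (totalDegree_mul _ _) ?_
      have h1 := le_trans (totalDegree_pderiv_le i (lieDeriv f p k)) ih
      have h2 : (f i).totalDegree ≤ Finset.univ.sup fun i => (f i).totalDegree :=
        Finset.le_sup (f := fun i => (f i).totalDegree) (Finset.mem_univ i)
      calc ((pderiv i) (lieDeriv f p k)).totalDegree + (f i).totalDegree
          ≤ (p.totalDegree + k * (Finset.univ.sup fun i => (f i).totalDegree)) +
            (Finset.univ.sup fun i => (f i).totalDegree) := add_le_add h1 h2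
        _ = p.totalDegree + (k+1) * (Finset.univ.sup fun i => (f i).totalDegree) := by ring

lemma lie_Nm_le {R : ℝ} (hR : 1 ≤ R) (f : Fin n → MvPolynomial (Fin n) ℝ)
    (p : MvPolynomial (Fin n) ℝ) (k : ℕ) :
    Nm R (lieDeriv f p k) ≤ (Nm R p + 1) *
      (((p.totalDegree : ℝ) + (Finset.univ.sup fun i => (f i).totalDegree) + 1) *
        ((∑ i, Nm R (f i)) + 1) + 1) ^ k * (Nat.factorial k) := by
  have h0 : (0:ℝ) ≤ R := le_trans zero_le_one hR
  set D : ℝ := (p.totalDegree : ℝ) with hD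
  set d : ℝ := ((Finset.univ.sup fun i => (f i).totalDegree : ℕ) : ℝ) with hd
  set F : ℝ := ∑ i, Nm R (f i) with hF
  have hFnn : 0 ≤ F := Finset.sum_nonneg fun i _ => Nm_nonneg h0 _
  have hDnn : 0 ≤ D := Nat.cast_nonneg _
  have hdnn : 0 ≤ d := Nat.cast_nonneg _
  set C : ℝ := Nm R p + 1 with hC
  set M : ℝ := (D + d + 1) * (F + 1) + 1 with hM
  have hCnn : 0 ≤ C := by have := Nm_nonneg h0 p; rw [hC]; linarith
  have hMnn : (0:ℝ) ≤ M := by rw [hM]; nlinarith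
  induction k with
  | zero =>
      simp only [lieDeriv, pow_zero, mul_one, Nat.factorial_zero, Nat.cast_one]
      rw [hC]; linarith [Nm_nonneg h0 p]
  | succ k ih =>
      have hdeg : ((lieDeriv f p k).totalDegree : ℝ) ≤ D + k * d := by
        have := lie_totalDegree_le f p k
        rw [hD, hd]
        exact_mod_cast this
      calc Nm R (lieDeriv f p (k+1))
          = Nm R (∑ i, (pderiv i (lieDeriv f p k)) * f i) := rfl
        _ ≤ ∑ i, Nm R ((pderiv i (lieDeriv f p k)) * f i) := Nm_sum_le h0 _ _
        _ ≤ ∑ i, ((lieDeriv f p k).totalDegree : ℝ) * Nm R (lieDeriv f p k) * Nm R (f i) := by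
            refine Finset.sum_le_sum fun i _ => ?_
            refine le_trans (Nm_mul_le h0 _ _) ?_
            exact mul_le_mul_of_nonneg_right (Nm_pderiv_le hR i _) (Nm_nonneg h0 _)
        _ = ((lieDeriv f p k).totalDegree : ℝ) * Nm R (lieDeriv f p k) * F := by
            rw [hF, Finset.mul_sum]
        _ ≤ (D + k * d) * (C * M ^ k * (Nat.factorial k)) * F := by
            refine mul_le_mul_of_nonneg_right (mul_le_mul hdeg ih (Nm_nonneg h0 _) ?_) hFnn
            positivity
        _ ≤ C * M ^ (k+1) * (Nat.factorial (k+1)) := by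
            rw [Nat.factorial_succ, pow_succ]
            push_cast
            have key : (D + k * d) * F ≤ M * (k + 1) := by
              have h1 : D + k * d ≤ (D + d + 1) * (k + 1) := by nlinarith [Nat.cast_nonneg (α := ℝ) k]
              have h2 : (D + d + 1) * (k+1) * F ≤ M * (k+1) := by
                rw [hM]; nlinarith [Nat.cast_nonneg (α := ℝ) k]
              nlinarith [Nat.cast_nonneg (α := ℝ) k]
            have hfk : (0:ℝ) ≤ (Nat.factorial k : ℝ) := Nat.cast_nonneg _
            have hMk : (0:ℝ) ≤ M ^ k := by positivity
            nlinarith [mul_nonneg (mul_nonneg hCnn hMk) hfk]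



lemma hasDerivAt_eval (f : Fin n → MvPolynomial (Fin n) ℝ) (x : ℝ → (Fin n → ℝ))
    (hx : ∀ t : ℝ, HasDerivAt x (evalVF f (x t)) t) (q : MvPolynomial (Fin n) ℝ) (t : ℝ) :
    HasDerivAt (fun s => eval (x s) q)
      (∑ i, eval (x t) (pderiv i q) * eval (x t) (f i)) t := by
  induction q using MvPolynomial.induction_on with
  | C a =>
      simp only [eval_C, pderiv_C, map_zero, zero_mul, Finset.sum_const_zero]
      exact hasDerivAt_const t a
  | add p q hp hq =>
      simp only [map_add, add_mul, Finset.sum_add_distrib]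
      exact hp.add hq
  | mul_X p j hp =>
      have hj : HasDerivAt (fun s => x s j) (evalVF f (x t) j) t :=
        hasDerivAt_pi.mp (hx t) j
      have h := hp.mul hj
      have hfun : (fun s => eval (x s) (p * X j)) = fun s => eval (x s) p * x s j := by
        funext s; simp
      rw [hfun]
      refine h.congr_deriv ?_
      symm
      simp only [Derivation.leibniz, pderiv_X, smul_eq_mul, map_add, eval_mul, eval_X,
        add_mul, Finset.sum_add_distrib, Finset.sum_mul]
      have hsingle : ∑ i : Fin n, (eval (x t)) p * (eval (x t)) ((Pi.single i 1 : Fin n → MvPolynomial (Fin n) ℝ) j) *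
          (eval (x t)) (f i) = (eval (x t)) p * evalVF f (x t) j := by
        rw [Finset.sum_eq_single j]
        · simp [evalVF]
        · intro i _ hij
          rw [Pi.single_eq_of_ne (Ne.symm hij)]
          simp
        · simp
      rw [hsingle, add_comm]
      congr 1
      refine Finset.sum_congr rfl fun i _ => ?_
      ring

lemma G_hasDerivAt (f : Fin n → MvPolynomial (Fin n) ℝ) (p : MvPolynomial (Fin n) ℝ)
    (x : ℝ → (Fin n → ℝ)) (hx : ∀ t : ℝ, HasDerivAt x (evalVF f (x t)) t) (k : ℕ) (t : ℝ) :
    HasDerivAt (fun s => eval (x s) (lieDeriv f p k)) (eval (x t) (lieDeriv f p (k+1))) t := by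
  have h := hasDerivAt_eval f x hx (lieDeriv f p k) t
  convert h using 1
  show eval (x t) (∑ i, (pderiv i (lieDeriv f p k)) * f i) = _
  rw [map_sum]
  exact Finset.sum_congr rfl fun i _ => by rw [eval_mul]


lemma taylor_rem : ∀ (N : ℕ) (G : ℕ → ℝ → ℝ), (∀ k s, HasDerivAt (G k) (G (k+1) s) s) →
    ∀ (K t : ℝ), 0 ≤ t → (∀ s ∈ Icc (0:ℝ) t, |G N s| ≤ K) →
    |G 0 t - ∑ k ∈ Finset.range N, (G k 0 / (Nat.factorial k)) * t^k|
      ≤ K * t^N / (Nat.factorial N) := by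
  intro N
  induction N with
  | zero =>
      intro G hG K t ht hb
      simpa using hb t ⟨le_refl 0 |>.trans ht, le_refl t⟩
  | succ N ih =>
      intro G hG K t ht hb
      set S : ℝ → ℝ := fun u => ∑ k ∈ Finset.range (N+1), (G k 0 / (Nat.factorial k)) * u^k
        with hS
      have hpoly : ∀ s : ℝ, HasDerivAt S
          (∑ k ∈ Finset.range N, (G (k+1) 0 / (Nat.factorial k)) * s^k) s := by
        intro s
        have h1 : HasDerivAt S
            (∑ k ∈ Finset.range (N+1), (G k 0 / (Nat.factorial k)) * (k * s^(k-1))) s := by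
          refine HasDerivAt.fun_sum fun k _ => ?_
          exact (hasDerivAt_pow k s).const_mul (G k 0 / (Nat.factorial k))
        convert h1 using 1
        rw [Finset.sum_range_succ']
        simp only [Nat.cast_zero, pow_zero, zero_mul, mul_zero, add_zero, Nat.factorial_zero,
          Nat.cast_one, Nat.add_sub_cancel]
        refine Finset.sum_congr rfl fun k _ => ?_
        rw [Nat.factorial_succ]
        have hk : ((Nat.factorial k : ℝ)) ≠ 0 := Nat.cast_ne_zero.mpr (Nat.factorial_ne_zero k)
        push_cast
        field_simp
      set h : ℝ → ℝ := fun s => G 0 s - S s with hh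
      have hder : ∀ s : ℝ, HasDerivAt h
          (G 1 s - ∑ k ∈ Finset.range N, (G (k+1) 0 / (Nat.factorial k)) * s^k) s :=
        fun s => (hG 0 s).sub (hpoly s)
      set B : ℝ → ℝ := fun s => K * s^(N+1) / (Nat.factorial (N+1)) with hB
      have hBder : ∀ s : ℝ, HasDerivAt B (K * s^N / (Nat.factorial N)) s := by
        intro s
        have h1 := (hasDerivAt_pow (N+1) s).const_mul (K / (Nat.factorial (N+1) : ℝ))
        have hfun : B = fun u : ℝ => (K / (Nat.factorial (N+1))) * u^(N+1) := by
          funext u; rw [hB]; ring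
        rw [hfun]
        refine h1.congr_deriv ?_
        symm
        rw [Nat.factorial_succ]
        have hk : ((Nat.factorial N : ℝ)) ≠ 0 := Nat.cast_ne_zero.mpr (Nat.factorial_ne_zero N)
        push_cast
        field_simp
      have key := image_norm_le_of_norm_deriv_right_le_deriv_boundary
        (f := h) (a := 0) (b := t)
        (fun s _ => (hder s).continuousAt.continuousWithinAt)
        (fun s _ => (hder s).hasDerivWithinAt)
        (B := B) (B' := fun s => K * s^N / (Nat.factorial N))
        (by
          have hS0 : S 0 = G 0 0 := by
            show (∑ k ∈ Finset.range (N+1), (G k 0 / (Nat.factorial k)) * (0:ℝ)^k) = G 0 0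
            rw [Finset.sum_range_succ']
            simp
          simp [hh, hS0, hB])
        hBder
        (by
          intro s hs
          have hIH := ih (fun k => G (k+1)) (fun k u => hG (k+1) u) K s hs.1
            (fun u hu => hb u ⟨hu.1, hu.2.trans hs.2.le⟩)
          simpa [Real.norm_eq_abs] using hIH)
      have := key (right_mem_Icc.mpr ht)
      simpa [hh, hS, hB, Real.norm_eq_abs] using this

lemma taylor_est (G : ℕ → ℝ → ℝ) (hG : ∀ k s, HasDerivAt (G k) (G (k+1) s) s)
    (C M : ℝ) (hM : 0 ≤ M)
    (hb : ∀ k, ∀ s ∈ Icc (-1:ℝ) 1, |G k s| ≤ C * M^k * (Nat.factorial k))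
    (t : ℝ) (ht : |t| ≤ 1) (N : ℕ) :
    |G 0 t - ∑ k ∈ Finset.range N, (G k 0 / (Nat.factorial k)) * t^k| ≤ C * (M*|t|)^N := by
  have hfac : ((Nat.factorial N : ℝ)) ≠ 0 := Nat.cast_ne_zero.mpr (Nat.factorial_ne_zero N)
  rcases le_or_gt 0 t with h0 | h0
  · have habs : |t| = t := abs_of_nonneg h0
    have := taylor_rem N G hG (C * M^N * (Nat.factorial N)) t h0
      (fun s hs => hb N s ⟨by linarith [hs.1], by rw [habs] at ht; linarith [hs.2]⟩)
    calc |G 0 t - ∑ k ∈ Finset.range N, (G k 0 / (Nat.factorial k)) * t^k|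
        ≤ C * M^N * (Nat.factorial N) * t^N / (Nat.factorial N) := this
      _ = C * (M*|t|)^N := by rw [habs, mul_pow]; field_simp
  · -- reflect
    set Gh : ℕ → ℝ → ℝ := fun k s => (-1)^k * G k (-s) with hGh
    have hGh' : ∀ k s, HasDerivAt (Gh k) (Gh (k+1) s) s := by
      intro k s
      have h1 : HasDerivAt (fun u : ℝ => G k (-u)) (G (k+1) (-s) * (-1)) s :=
        (hG k (-s)).comp s (hasDerivAt_neg s)
      have h2 := h1.const_mul ((-1:ℝ)^k)
      refine h2.congr_deriv ?_
      symm
      rw [hGh]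
      ring
    have hbh : ∀ k, ∀ s ∈ Icc (0:ℝ) (-t), |Gh k s| ≤ C * M^k * (Nat.factorial k) := by
      intro k s hs
      have habs : |t| = -t := abs_of_neg h0
      have : |Gh k s| = |G k (-s)| := by
        rw [hGh]; rw [abs_mul, abs_pow, abs_neg, abs_one, one_pow, one_mul]
      rw [this]
      refine hb k (-s) ⟨by linarith [hs.2, habs ▸ ht], by linarith [hs.1]⟩
    have hres := taylor_rem N Gh hGh' (C * M^N * (Nat.factorial N)) (-t) (by linarith)
      (fun s hs => hbh N s hs)
    have hsum : ∑ k ∈ Finset.range N, (Gh k 0 / (Nat.factorial k)) * (-t)^k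
        = ∑ k ∈ Finset.range N, (G k 0 / (Nat.factorial k)) * t^k := by
      refine Finset.sum_congr rfl fun k _ => ?_
      rw [hGh]
      simp only [neg_zero]
      rw [neg_pow t k]
      ring_nf
      rw [mul_comm k 2, pow_mul]
      norm_num
    have hG0 : Gh 0 (-t) = G 0 t := by rw [hGh]; simp
    rw [hsum, hG0] at hres
    have habs : |t| = -t := abs_of_neg h0
    calc |G 0 t - ∑ k ∈ Finset.range N, (G k 0 / (Nat.factorial k)) * t^k|
        ≤ C * M^N * (Nat.factorial N) * (-t)^N / (Nat.factorial N) := hres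
      _ = C * (M*|t|)^N := by rw [habs, mul_pow]; field_simp

end TaylorAux

open TaylorAux in
/-- **Taylor expansion of a polynomial along a trajectory.** If `x : ℝ → ℝⁿ`
satisfies `ẋ(t) = f(x(t))` for all `t` and `x(0) = x₀`, then `t ↦ p(x(t))` is
real-analytic at `0`, and on some neighborhood of `0` it is the sum of the
convergent series `Σᵢ L^i_f p(x₀) · tⁱ / i!`. -/
theorem taylor_along_trajectory {n : ℕ} (f : Fin n → MvPolynomial (Fin n) ℝ)
    (p : MvPolynomial (Fin n) ℝ) (x : ℝ → (Fin n → ℝ)) (x0 : Fin n → ℝ)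
    (hx : ∀ t : ℝ, HasDerivAt x (evalVF f (x t)) t) (hx0 : x 0 = x0) :
    AnalyticAt ℝ (fun t => eval (x t) p) 0 ∧
    ∃ ε > (0:ℝ), ∀ t : ℝ, |t| < ε →
      HasSum (fun i : ℕ => eval x0 (lieDeriv f p i) * t ^ i / (Nat.factorial i))
        (eval (x t) p) := by
  classical
  set G : ℕ → ℝ → ℝ := fun k s => eval (x s) (lieDeriv f p k) with hGdef
  have hG : ∀ k s, HasDerivAt (G k) (G (k+1) s) s :=
    fun k s => TaylorAux.G_hasDerivAt f p x hx k s
  have hxc : Continuous x := continuous_iff_continuousAt.mpr fun t => (hx t).continuousAt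
  obtain ⟨R0, hR0⟩ := (isCompact_Icc (a := (-1:ℝ)) (b := 1)).exists_bound_of_continuousOn
    hxc.continuousOn
  set R : ℝ := max R0 1 with hRdef
  have hR1 : 1 ≤ R := le_max_right _ _
  have hR0' : (0:ℝ) ≤ R := by linarith
  have hxR : ∀ s ∈ Icc (-1:ℝ) 1, ∀ i, |x s i| ≤ R := by
    intro s hs i
    calc |x s i| = ‖x s i‖ := rfl
      _ ≤ ‖x s‖ := norm_le_pi_norm (x s) i
      _ ≤ R0 := hR0 s hs
      _ ≤ R := le_max_left _ _
  set C : ℝ := TaylorAux.Nm R p + 1 with hC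
  set M : ℝ := ((p.totalDegree : ℝ) + (Finset.univ.sup fun i => (f i).totalDegree) + 1) *
        ((∑ i, TaylorAux.Nm R (f i)) + 1) + 1 with hM
  have hNmf : (0:ℝ) ≤ ∑ i, TaylorAux.Nm R (f i) :=
    Finset.sum_nonneg fun i _ => TaylorAux.Nm_nonneg hR0' _
  have hC0 : 0 < C := by
    have := TaylorAux.Nm_nonneg hR0' p; rw [hC]; linarith
  have hM1 : 1 ≤ M := by
    rw [hM]
    have h1 : (0:ℝ) ≤ (p.totalDegree : ℝ) := Nat.cast_nonneg _
    have h2 : (0:ℝ) ≤ ((Finset.univ.sup fun i => (f i).totalDegree : ℕ) : ℝ) := Nat.cast_nonneg _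
    nlinarith
  have hM0 : (0:ℝ) < M := lt_of_lt_of_le one_pos hM1
  have hGb : ∀ k, ∀ s ∈ Icc (-1:ℝ) 1, |G k s| ≤ C * M^k * (Nat.factorial k) := by
    intro k s hs
    refine le_trans (TaylorAux.abs_eval_le hR0' (hxR s hs) _) ?_
    rw [hC, hM]
    exact TaylorAux.lie_Nm_le hR1 f p k
  set ε : ℝ := min 1 (1/(2*M)) with hε
  have hε0 : 0 < ε := lt_min one_pos (by positivity)
  have hcore : ∀ t : ℝ, |t| < ε →
      HasSum (fun k : ℕ => (G k 0 / (Nat.factorial k)) * t^k) (G 0 t) := by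
    intro t ht
    have ht1 : |t| ≤ 1 := le_trans ht.le (min_le_left _ _)
    have htM : M * |t| ≤ 1/2 := by
      have h2 : |t| ≤ 1/(2*M) := le_trans ht.le (min_le_right _ _)
      calc M * |t| ≤ M * (1/(2*M)) := mul_le_mul_of_nonneg_left h2 hM0.le
        _ = 1/2 := by field_simp
    have hgeo : Summable (fun k : ℕ => C * (M*|t|)^k) :=
      (summable_geometric_of_lt_one (by positivity) (lt_of_le_of_lt htM (by norm_num))).mul_left C
    have hsum : Summable (fun k : ℕ => (G k 0 / (Nat.factorial k)) * t^k) := by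
      refine Summable.of_norm_bounded hgeo ?_
      intro k
      have h1 : |G k 0| ≤ C * M^k * (Nat.factorial k) := hGb k 0 ⟨by norm_num, by norm_num⟩
      have hfk : (0:ℝ) < (Nat.factorial k : ℝ) := Nat.cast_pos.mpr (Nat.factorial_pos k)
      rw [Real.norm_eq_abs, abs_mul, abs_div, Nat.abs_cast, abs_pow, mul_pow]
      calc |G k 0| / (Nat.factorial k) * |t|^k
          ≤ (C * M^k * (Nat.factorial k)) / (Nat.factorial k) * |t|^k := by gcongr
        _ = C * (M^k * |t|^k) := by field_simp
    have htend := hsum.hasSum.tendsto_sum_nat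
    have htend2 : Filter.Tendsto (fun N => ∑ k ∈ Finset.range N,
        (G k 0 / (Nat.factorial k)) * t^k) Filter.atTop (nhds (G 0 t)) := by
      rw [tendsto_iff_dist_tendsto_zero]
      refine squeeze_zero (g := fun N => C * (M*|t|)^N) (fun N => dist_nonneg) (fun N => ?_) ?_
      · show dist _ (G 0 t) ≤ C * (M*|t|)^N
        rw [Real.dist_eq, abs_sub_comm]
        exact taylor_est G hG C M hM0.le hGb t ht1 N
      · have h := tendsto_pow_atTop_nhds_zero_of_lt_one
          (mul_nonneg hM0.le (abs_nonneg t)) (lt_of_le_of_lt htM (by norm_num) : M*|t| < 1)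
        simpa using h.const_mul C
    have heq : (∑' k : ℕ, (G k 0 / (Nat.factorial k)) * t^k) = G 0 t :=
      tendsto_nhds_unique htend htend2
    exact heq ▸ hsum.hasSum
  have hGx0 : ∀ k, G k 0 = eval x0 (lieDeriv f p k) := by
    intro k; rw [hGdef]; simp [hx0]
  have hG0 : ∀ t, G 0 t = eval (x t) p := fun t => rfl
  constructor
  · set a : ℕ → ℝ := fun k => G k 0 / (Nat.factorial k) with ha
    set P : FormalMultilinearSeries ℝ ℝ ℝ :=
      fun k => ContinuousMultilinearMap.mkPiRing ℝ (Fin k) (a k) with hP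
    have hcoe : ((ε.toNNReal : NNReal) : ℝ) = ε := Real.coe_toNNReal _ hε0.le
    have hεM : M * ε ≤ 1 := by
      have h2 : ε ≤ 1/(2*M) := min_le_right _ _
      calc M * ε ≤ M * (1/(2*M)) := mul_le_mul_of_nonneg_left h2 hM0.le
        _ = 1/2 := by field_simp
        _ ≤ 1 := by norm_num
    have hbound : ∀ k : ℕ, ‖P k‖ * ε^k ≤ C := by
      intro k
      have hfk : (0:ℝ) < (Nat.factorial k : ℝ) := Nat.cast_pos.mpr (Nat.factorial_pos k)
      have h1 : |G k 0| ≤ C * M^k * (Nat.factorial k) := hGb k 0 ⟨by norm_num, by norm_num⟩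
      have hnorm : ‖P k‖ = |a k| := by
        exact (ContinuousMultilinearMap.norm_mkPiRing (a k)).trans (Real.norm_eq_abs _)
      rw [hnorm]
      have h2 : |a k| ≤ C * M^k := by
        rw [ha, abs_div, Nat.abs_cast, div_le_iff₀ hfk]
        calc |G k 0| ≤ C * M^k * (Nat.factorial k) := h1
          _ = C * M ^ k * (Nat.factorial k) := rfl
      calc |a k| * ε^k ≤ (C * M^k) * ε^k :=
            mul_le_mul_of_nonneg_right h2 (pow_nonneg hε0.le _)
        _ = C * (M*ε)^k := by rw [mul_pow]; ring
        _ ≤ C * 1^k := by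
            refine mul_le_mul_of_nonneg_left (pow_le_pow_left₀ (by positivity) hεM k) hC0.le
        _ = C := by rw [one_pow, mul_one]
    have hball : HasFPowerSeriesOnBall (fun t => eval (x t) p) P 0 (ENNReal.ofReal ε) := by
      refine ⟨?_, ?_, ?_⟩
      · have hone : (ENNReal.ofReal ε) = ((ε.toNNReal : NNReal) : ENNReal) := rfl
        rw [hone]
        refine FormalMultilinearSeries.le_radius_of_bound _ C fun k => ?_
        rw [hcoe]
        exact hbound k
      · rw [ENNReal.ofReal_pos]; exact hε0
      · intro y hy
        rw [Metric.emetric_ball, Metric.mem_ball, Real.dist_eq, sub_zero] at hy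
        have hcs := hcore y hy
        have hfun : (fun k : ℕ => P k fun _ : Fin k => y) =
            fun k : ℕ => (G k 0 / (Nat.factorial k)) * y^k := by
          funext k
          show ContinuousMultilinearMap.mkPiRing ℝ (Fin k) (a k) (fun _ => y) = _
          rw [ContinuousMultilinearMap.mkPiRing_apply]
          simp [ha, Finset.prod_const, mul_comm]
        rw [hfun, zero_add]
        rw [← hG0 y]
        exact hcs
    exact hball.analyticAt
  · refine ⟨ε, hε0, fun t ht => ?_⟩
    have h := hcore t ht
    have hfun : (fun i : ℕ => eval x0 (lieDeriv f p i) * t ^ i / (Nat.factorial i)) =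
        fun k : ℕ => (G k 0 / (Nat.factorial k)) * t^k := by
      funext k
      rw [hGx0 k]
      ring
    rw [hfun, ← hG0 t]
    exact h
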